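/- Φ satisfies the recurrence on functionals: for any functional ℓ on T(V), basis vector e_i, and sequence x of length L, ⟨ℓ ⊗ e_i, Φ(x_1,...,x_L)⟩ = Σ_{k=1}^{L-1} ⟨ℓ, Φ(x_1,...,x_k)⟩ · ⟨e_i, x_{k+1}⟩, where ℓ is supported on degree m and ℓ ⊗ e_i on degree m+1. -/

import Mathlib

/-- Φ_m(x₁,...,x_L) = Σ_{1 ≤ i₁ < ... < i_m ≤ L} x_{i₁} ⊗ ... ⊗ x_{i_m} ∈ (ℝ^d)^{⊗m},
given in coordinates: its coordinate at a multi-index idx : Fin m → Fin d. -/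
def PhiM (d m : ℕ) (x : List (Fin d → ℝ)) : (Fin m → Fin d) → ℝ :=
  fun idx => ∑ f ∈ Finset.univ.filter
      (fun f : Fin m → Fin x.length => ∀ a b : Fin m, a < b → f a < f b),
    ∏ k, x.get (f k) (idx k)

/-- The pairing ⟨ℓ, Φ_m(x)⟩ of a degree-m functional ℓ (in coordinates) with Φ_m(x). -/
def pairPhi (d m : ℕ) (ℓ : (Fin m → Fin d) → ℝ) (x : List (Fin d → ℝ)) : ℝ :=
  ∑ idx : Fin m → Fin d, ℓ idx * PhiM d m x idx

/-- The functional ℓ ⊗ e_i : if ℓ is a degree-m functional, ℓ ⊗ e_i has degree m+1,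
with coordinates (ℓ ⊗ e_i)(idx) = ℓ(idx restricted) · [idx_last = i]. -/
def extFun (d m : ℕ) (ℓ : (Fin m → Fin d) → ℝ) (i : Fin d) :
    (Fin (m + 1) → Fin d) → ℝ :=
  fun idx => ℓ (fun k => idx k.castSucc) * (if idx (Fin.last m) = i then 1 else 0)

open Finset

lemma heq_fin_fun {m a b : ℕ} (h : a = b) (f : Fin m → Fin a) (g : Fin m → Fin b)
    (hv : ∀ k, (f k : ℕ) = (g k : ℕ)) : HEq f g := by
  subst h
  exact heq_of_eq (funext fun k => Fin.ext (hv k))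

lemma core {n m : ℕ} (F : Fin (m+1) → Fin n → ℝ) :
    (∑ f ∈ Finset.univ.filter (fun f : Fin (m+1) → Fin n => ∀ a b : Fin (m+1), a < b → f a < f b),
      ∏ k, F k (f k))
    = ∑ j : Fin n,
        (∑ g ∈ Finset.univ.filter (fun g : Fin m → Fin (j : ℕ) => ∀ a b : Fin m, a < b → g a < g b),
          ∏ k : Fin m, F k.castSucc ⟨(g k : ℕ), lt_trans (g k).isLt j.isLt⟩) * F (Fin.last m) j := by
  simp_rw [Finset.sum_mul]
  rw [Finset.sum_sigma']
  refine Finset.sum_bij'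
    (i := fun f hf => ⟨f (Fin.last m),
      fun k => ⟨(f k.castSucc : ℕ), by
        have := (Finset.mem_filter.mp hf).2 k.castSucc (Fin.last m) (Fin.castSucc_lt_last k)
        exact this⟩⟩)
    (j := fun p _ => Fin.snoc (fun k => ⟨(p.2 k : ℕ), lt_trans (p.2 k).isLt p.1.isLt⟩) p.1)
    ?_ ?_ ?_ ?_ ?_
  · -- i maps into sigma set
    intro f hf
    simp only [Finset.mem_sigma, Finset.mem_univ, Finset.mem_filter, true_and]
    intro a b hab
    have := (Finset.mem_filter.mp hf).2 a.castSucc b.castSucc (by simpa using hab)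
    exact this
  · -- j maps into filter set
    rintro ⟨j, g⟩ hp
    simp only [Finset.mem_sigma, Finset.mem_univ, Finset.mem_filter, true_and] at hp
    simp only [Finset.mem_filter, Finset.mem_univ, true_and]
    intro a b hab
    rcases Fin.eq_castSucc_or_eq_last b with ⟨b', rfl⟩ | rfl
    · rcases Fin.eq_castSucc_or_eq_last a with ⟨a', rfl⟩ | rfl
      · simp only [Fin.snoc_castSucc]
        exact hp a' b' (by simpa using hab)
      · exact absurd hab (by simp [Fin.lt_iff_val_lt_val, Fin.le_last, not_lt,
          (b'.castSucc.le_last).trans_eq rfl] )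
    · rcases Fin.eq_castSucc_or_eq_last a with ⟨a', rfl⟩ | rfl
      · simp only [Fin.snoc_castSucc, Fin.snoc_last]
        exact (g a').isLt
      · exact absurd hab (lt_irrefl _)
  · -- left inverse
    intro f hf
    funext k
    rcases Fin.eq_castSucc_or_eq_last k with ⟨k', rfl⟩ | rfl
    · simp [Fin.snoc_castSucc]
    · simp [Fin.snoc_last]
  · -- right inverse
    rintro ⟨j, g⟩ hp
    refine Sigma.ext (by simpa using Fin.snoc_last _ _) ?_
    simp only []
    simp only [Fin.snoc_last, Fin.snoc_castSucc]
    exact heq_fin_fun (congrArg Fin.val (Fin.snoc_last _ _)) _ _ (fun k => rfl)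
  · -- values
    intro f hf
    rw [Fin.prod_univ_castSucc]

lemma sum_snoc {m d : ℕ} (i : Fin d) (G : (Fin (m + 1) → Fin d) → ℝ) :
    (∑ idx : Fin (m + 1 + 1) → Fin d,
      (if idx (Fin.last (m + 1)) = i then 1 else 0) * G (fun k => idx k.castSucc))
    = ∑ p : Fin (m + 1) → Fin d, G p := by
  rw [← (Fin.snocEquiv (fun _ => Fin d)).sum_comp
    (fun idx => (if idx (Fin.last (m + 1)) = i then (1:ℝ) else 0) * G (fun k => idx k.castSucc))]
  simp only [Fin.snocEquiv, Equiv.coe_fn_mk]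
  rw [Fintype.sum_prod_type]
  simp [Fin.snoc_last, Fin.snoc_castSucc, Finset.sum_ite_eq']

lemma phi_eq' (d m : ℕ) (l : List (Fin d → ℝ)) (n : ℕ) (h : l.length = n) (idx : Fin m → Fin d) :
    PhiM d m l idx
    = ∑ f ∈ Finset.univ.filter
      (fun f : Fin m → Fin n => ∀ a b : Fin m, a < b → f a < f b),
      ∏ k, l.get ((f k).cast h.symm) (idx k) := by
  subst h; rfl


/-- Recurrence for functionals on Φ: for ℓ supported on degree m ≥ 1 (written m+1 here),
⟨ℓ ⊗ e_i, Φ(x₁,...,x_L)⟩ = Σ_{k=1}^{L-1} ⟨ℓ, Φ(x₁,...,x_k)⟩ · ⟨e_i, x_{k+1}⟩. -/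
theorem stmt6 (d L m : ℕ) (ℓ : (Fin (m + 1) → Fin d) → ℝ) (i : Fin d)
    (x : Fin L → Fin d → ℝ) :
    pairPhi d (m + 2) (extFun d (m + 1) ℓ i) (List.ofFn x) =
      ∑ k : Fin L, if 1 ≤ (k : ℕ) then
          pairPhi d (m + 1) ℓ ((List.ofFn x).take k) * x k i
        else 0 := by

  have hL : (List.ofFn x).length = L := List.length_ofFn
  set S : Fin L → (Fin (m + 1) → Fin d) → ℝ := fun j p =>
    ∑ g ∈ Finset.univ.filter
      (fun g : Fin (m + 1) → Fin (j : ℕ) => ∀ a b : Fin (m + 1), a < b → g a < g b),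
      ∏ k : Fin (m + 1), x ⟨(g k : ℕ), lt_trans (g k).isLt j.isLt⟩ (p k) with hS
  have h1 : ∀ idx : Fin (m + 2) → Fin d,
      PhiM d (m + 2) (List.ofFn x) idx
        = ∑ j : Fin L, S j (fun k => idx k.castSucc) * x j (idx (Fin.last (m + 1))) := by
    intro idx
    rw [phi_eq' d (m + 2) _ L hL idx]
    have hc : (∑ f ∈ Finset.univ.filter
        (fun f : Fin (m + 2) → Fin L => ∀ a b : Fin (m + 2), a < b → f a < f b),
        ∏ k, (List.ofFn x).get ((f k).cast hL.symm) (idx k))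
        = ∑ f ∈ Finset.univ.filter
        (fun f : Fin (m + 2) → Fin L => ∀ a b : Fin (m + 2), a < b → f a < f b),
        ∏ k, x (f k) (idx k) := by
      refine Finset.sum_congr rfl fun f _ => Finset.prod_congr rfl fun k _ => ?_
      simp [List.get_ofFn]
    rw [hc, core (n := L) (m := m + 1) (fun k j => x j (idx k))]
  have h2 : ∀ k : Fin L, ∀ p : Fin (m + 1) → Fin d,
      PhiM d (m + 1) ((List.ofFn x).take k) p = S k p := by
    intro k p
    have hlen : ((List.ofFn x).take (k : ℕ)).length = (k : ℕ) := by
      simp [List.length_take, hL]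
    rw [phi_eq' d (m + 1) _ (k : ℕ) hlen p]
    refine Finset.sum_congr rfl fun g _ => Finset.prod_congr rfl fun kk _ => ?_
    rw [List.get_eq_getElem]
    simp only [List.getElem_take, List.getElem_ofFn]
    congr 1
  have hmain : pairPhi d (m + 2) (extFun d (m + 1) ℓ i) (List.ofFn x)
      = ∑ p : Fin (m + 1) → Fin d, ∑ j : Fin L, ℓ p * S j p * x j i := by
    unfold pairPhi extFun
    have hterm : ∀ idx : Fin (m + 2) → Fin d,
        (ℓ (fun k => idx k.castSucc) * (if idx (Fin.last (m + 1)) = i then 1 else 0)) *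
          PhiM d (m + 2) (List.ofFn x) idx
        = (if idx (Fin.last (m + 1)) = i then (1:ℝ) else 0) *
            (∑ j : Fin L, ℓ (fun k => idx k.castSucc) * S j (fun k => idx k.castSucc) * x j i) := by
      intro idx
      rw [h1 idx]
      by_cases hc : idx (Fin.last (m + 1)) = i
      · rw [if_pos hc, hc, mul_one, one_mul, Finset.mul_sum]
        exact Finset.sum_congr rfl fun j _ => by ring
      · rw [if_neg hc, mul_zero, zero_mul, zero_mul]
    rw [← sum_snoc (m := m) (d := d) i (fun p => ∑ j : Fin L, ℓ p * S j p * x j i)]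
    exact Finset.sum_congr rfl fun idx _ => hterm idx
  have hR : ∀ k : Fin L,
      (if 1 ≤ (k : ℕ) then pairPhi d (m + 1) ℓ ((List.ofFn x).take k) * x k i else 0)
      = ∑ p : Fin (m + 1) → Fin d, ℓ p * S k p * x k i := by
    intro k
    have hpair : pairPhi d (m + 1) ℓ ((List.ofFn x).take k)
        = ∑ p : Fin (m + 1) → Fin d, ℓ p * S k p :=
      Finset.sum_congr rfl fun p _ => by rw [h2 k p]
    by_cases hk : 1 ≤ (k : ℕ)
    · rw [if_pos hk, hpair, Finset.sum_mul]
    · rw [if_neg hk]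
      have hk0 : (k : ℕ) = 0 := by omega
      have hSz : ∀ p : Fin (m + 1) → Fin d, S k p = 0 := fun p =>
        Finset.sum_eq_zero fun g _ => Fin.elim0 ((g 0).cast hk0)
      simp [hSz]
  rw [hmain, Finset.sum_congr rfl fun k _ => hR k]
  exact Finset.sum_comm
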